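/- Let n, m, z, ψ, T be positive integers and let A ∈ ℝ^{n×z}, B ∈ ℝ^{n×m}, D ∈ ℝ^{n×ψ}. Suppose two data sets satisfy S⁺ = A·Δ + B·I₀ + D·W (first trajectory, with inputs I₀ ∈ ℝ^{m×T}) and S̄⁺ = A·Δ̄ + D·W̄ (second trajectory, gathered with zero control input), where Δ, Δ̄ ∈ ℝ^{z×T}, W, W̄ ∈ ℝ^{ψ×T}, S⁺, S̄⁺ ∈ ℝ^{n×T}. Suppose Q ∈ ℝ^{T×T} satisfies Δ = Δ̄·Q, and suppose I₀·I₀ᵀ is invertible; define the right pseudoinverse I₀† := I₀ᵀ·(I₀·I₀ᵀ)⁻¹. Then the unknown input matrix is exactly characterized from data as B = (S⁺ − (S̄⁺ − D·W̄)·Q − D·W)·I₀†. -/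
import Mathlib

open Matrix

/-- Data-based characterization of the input matrix `B` (Lemma 1, second part):
given two trajectories `S⁺ = A·Δ + B·I₀ + D·W` and `S̄⁺ = A·Δ̄ + D·W̄` (zero input),
a matrix `Q` with `Δ = Δ̄·Q`, and invertibility of `I₀·I₀ᵀ`, one has
`B = (S⁺ − (S̄⁺ − D·W̄)·Q − D·W)·I₀†` with `I₀† = I₀ᵀ·(I₀·I₀ᵀ)⁻¹`. -/
theorem data_based_characterization_of_B
    (n m z ψ T : ℕ) (hn : 0 < n) (hm : 0 < m) (hz : 0 < z) (hψ : 0 < ψ) (hT : 0 < T)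
    (A : Matrix (Fin n) (Fin z) ℝ) (B : Matrix (Fin n) (Fin m) ℝ)
    (D : Matrix (Fin n) (Fin ψ) ℝ)
    (I₀ : Matrix (Fin m) (Fin T) ℝ)
    (W Wbar : Matrix (Fin ψ) (Fin T) ℝ)
    (Δ Δbar : Matrix (Fin z) (Fin T) ℝ)
    (Sp Sbarp : Matrix (Fin n) (Fin T) ℝ)
    (hdata1 : Sp = A * Δ + B * I₀ + D * W)
    (hdata2 : Sbarp = A * Δbar + D * Wbar)
    (Q : Matrix (Fin T) (Fin T) ℝ) (hQ : Δ = Δbar * Q)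
    (hinv : IsUnit (I₀ * I₀ᵀ)) :
    B = (Sp - (Sbarp - D * Wbar) * Q - D * W) * (I₀ᵀ * (I₀ * I₀ᵀ)⁻¹) := by
  have h1 : Sp - (Sbarp - D * Wbar) * Q - D * W = B * I₀ := by
    subst hdata1 hdata2 hQ
    simp only [add_sub_cancel_right, Matrix.add_mul, Matrix.mul_assoc]
    abel
  rw [h1, Matrix.mul_assoc, ← Matrix.mul_assoc I₀, Matrix.mul_nonsing_inv _
    ((Matrix.isUnit_iff_isUnit_det _).mp hinv), Matrix.mul_one]
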